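/- For a transitive partial applicative structure R the following are equivalent: (i) R is antisymmetric; (ii) R satisfies 1W and TL; (iii) R satisfies 1W and TO. -/

import Mathlib

/-- Application lifted to partially-defined arguments: `oapp op x y` is the
value of the applicative term `x · y`, where `x`, `y` may be undefined. -/
def oapp {R : Type} (op : R → R → Option R) (x y : Option R) : Option R :=
  x.bind fun a => y.bind fun b => op a b

/-- The indexed entailment relation `φ ⊢_I ψ` on `P(R)^I` induced by a PAS. -/
def Entails {R : Type} (op : R → R → Option R) {I : Type} (φ ψ : I → Set R) : Prop :=
  ∃ r : R, ∀ i : I, ∀ a ∈ φ i, ∃ b : R, op r a = some b ∧ b ∈ ψ i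

/-- The entailment relation `A ⊢ B` on `P(R)` induced by a PAS. -/
def Entails1 {R : Type} (op : R → R → Option R) (A B : Set R) : Prop :=
  ∃ r : R, ∀ a ∈ A, ∃ b : R, op r a = some b ∧ b ∈ B

/-- `piter f n a` is the `n`-th iterate `f^n(a)` of the partial function `f` at `a`. -/
def piter {R : Type} (f : R → Option R) : ℕ → R → Option R
  | 0 => fun a => some a
  | n + 1 => fun a => (piter f n a).bind f

/-- A partial function is TO if every point has finite odd order or finite divergence. -/
def TOfun {R : Type} (f : R → Option R) : Prop :=
  ∀ a : R,
    (∃ n : ℕ, (1 ≤ n ∧ piter f n a = some a ∧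
        ∀ m : ℕ, 1 ≤ m → piter f m a = some a → n ≤ m) ∧ Odd n) ∨
    (∃ n : ℕ, 1 ≤ n ∧ piter f n a = none)

/-- A partial function is TL if every point is a fixed point or has finite divergence. -/
def TLfun {R : Type} (f : R → Option R) : Prop :=
  ∀ a : R, f a = some a ∨ (∃ n : ℕ, 1 ≤ n ∧ piter f n a = none)

section Aux

variable {R : Type} (op : R → R → Option R)

lemma piter_one (f : R → Option R) (a : R) : piter f 1 a = f a := by
  simp [piter]

lemma piter_add (f : R → Option R) (m n : ℕ) (a : R) :
    piter f (m + n) a = (piter f m a).bind (piter f n) := by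
  induction n with
  | zero => simp [piter]
  | succ n ih =>
    show piter f (m + n + 1) a = _
    cases h : piter f m a with
    | none => simp [piter, ih, h]
    | some b => simp [piter, ih, h]

lemma sent_trans
    (hTrans : ∀ (I : Type) (φ ψ ρ : I → Set R),
      Entails op φ ψ → Entails op ψ ρ → Entails op φ ρ)
    {a b c : R} (h1 : ∃ s, op s a = some b) (h2 : ∃ t, op t b = some c) :
    ∃ u, op u a = some c := by
  obtain ⟨s, hs⟩ := h1
  obtain ⟨t, ht⟩ := h2
  have e1 : Entails op (fun _ : Unit => ({a} : Set R)) (fun _ => {b}) :=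
    ⟨s, fun _ x hx => ⟨b, by rw [Set.eq_of_mem_singleton hx]; exact ⟨hs, rfl⟩⟩⟩
  have e2 : Entails op (fun _ : Unit => ({b} : Set R)) (fun _ => {c}) :=
    ⟨t, fun _ x hx => ⟨c, by rw [Set.eq_of_mem_singleton hx]; exact ⟨ht, rfl⟩⟩⟩
  obtain ⟨u, hu⟩ := hTrans Unit _ _ _ e1 e2
  obtain ⟨y, hy1, hy2⟩ := hu () a rfl
  exact ⟨u, by rw [hy1, hy2]⟩

lemma sent_of_piter
    (hTrans : ∀ (I : Type) (φ ψ ρ : I → Set R),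
      Entails op φ ψ → Entails op ψ ρ → Entails op φ ρ)
    (r : R) :
    ∀ n : ℕ, 1 ≤ n → ∀ a b : R,
      piter (fun x => op r x) n a = some b → ∃ s, op s a = some b := by
  intro n
  induction n with
  | zero => intro h; omega
  | succ n ih =>
    intro _ a b hab
    rcases Nat.eq_zero_or_pos n with h0 | hpos
    · subst h0
      exact ⟨r, by simpa [piter_one] using hab⟩
    · have hab' : (piter (fun x => op r x) n a).bind (fun x => op r x) = some b := hab
      rcases Option.bind_eq_some_iff.mp hab' with ⟨c, hc, hcb⟩
      exact sent_trans op hTrans (ih hpos a c hc) ⟨r, hcb⟩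

lemma fix_of_cycle
    (hTrans : ∀ (I : Type) (φ ψ ρ : I → Set R),
      Entails op φ ψ → Entails op ψ ρ → Entails op φ ρ)
    (h1W : ∀ r s a b : R, op r a = some b → op s b = some a → a = b)
    (r a : R) (m : ℕ) (hm : 1 ≤ m)
    (hcyc : piter (fun x => op r x) m a = some a) : op r a = some a := by
  rcases Nat.exists_eq_add_of_le hm with ⟨k, rfl⟩
  rcases Nat.eq_zero_or_pos k with hk | hk
  · subst hk
    simpa [piter_one] using hcyc
  · have hsplit := piter_add (fun x => op r x) 1 k a
    rw [hsplit, piter_one] at hcyc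
    rcases Option.bind_eq_some_iff.mp hcyc with ⟨a1, ha1, hk'⟩
    obtain ⟨t, ht⟩ := sent_of_piter op hTrans r k hk a1 a hk'
    have : a = a1 := h1W r t a a1 ha1 ht
    rw [ha1, this]

lemma oneW_of_antisym
    (hA : ∀ (I : Type) (φ ψ : I → Set R),
        Entails op φ ψ → Entails op ψ φ → φ = ψ) :
    ∀ r s a b : R, op r a = some b → op s b = some a → a = b := by
  intro r s a b hr hs
  have e1 : Entails op (fun _ : Unit => ({a} : Set R)) (fun _ => {b}) :=
    ⟨r, fun _ x hx => ⟨b, by rw [Set.eq_of_mem_singleton hx]; exact ⟨hr, rfl⟩⟩⟩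
  have e2 : Entails op (fun _ : Unit => ({b} : Set R)) (fun _ => {a}) :=
    ⟨s, fun _ x hx => ⟨a, by rw [Set.eq_of_mem_singleton hx]; exact ⟨hs, rfl⟩⟩⟩
  have h := hA Unit _ _ e1 e2
  have : a ∈ ({b} : Set R) := by
    rw [← congrFun h ()]; rfl
  exact this

lemma subset_of_mutual
    (hTrans : ∀ (I : Type) (φ ψ ρ : I → Set R),
      Entails op φ ψ → Entails op ψ ρ → Entails op φ ρ)
    (h1W : ∀ r s a b : R, op r a = some b → op s b = some a → a = b)
    (hTO : ∀ r : R, TOfun (fun a => op r a))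
    {I : Type} {φ ψ : I → Set R}
    (h1 : Entails op φ ψ) (h2 : Entails op ψ φ) :
    ∀ i, φ i ⊆ ψ i := by
  obtain ⟨r, hr⟩ := h1
  obtain ⟨s, hs⟩ := h2
  have hb : ∀ p : {p : I × R // p.2 ∈ φ p.1},
      ∃ b, op r p.val.2 = some b ∧ b ∈ ψ p.val.1 := fun p => hr _ _ p.prop
  choose b hb1 hb2 using hb
  have hc : ∀ p : {p : I × R // p.2 ∈ φ p.1},
      ∃ c, op s (b p) = some c ∧ c ∈ φ p.val.1 := fun p => hs _ _ (hb2 p)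
  choose c hc1 hc2 using hc
  have e1 : Entails op (fun p : {p : I × R // p.2 ∈ φ p.1} => ({p.val.2} : Set R))
      (fun p => {b p}) :=
    ⟨r, fun p x hx => ⟨b p, by rw [Set.eq_of_mem_singleton hx]; exact ⟨hb1 p, rfl⟩⟩⟩
  have e2 : Entails op (fun p : {p : I × R // p.2 ∈ φ p.1} => ({b p} : Set R))
      (fun p => {c p}) :=
    ⟨s, fun p x hx => ⟨c p, by rw [Set.eq_of_mem_singleton hx]; exact ⟨hc1 p, rfl⟩⟩⟩
  obtain ⟨u, hu⟩ := hTrans _ _ _ _ e1 e2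
  intro i a ha
  -- u maps φ i into φ i
  have hInv : ∀ x, ∀ hx : x ∈ φ i, op u x = some (c ⟨(i, x), hx⟩) := by
    intro x hx
    obtain ⟨y, hy1, hy2⟩ := hu ⟨(i, x), hx⟩ x rfl
    rw [hy1, Set.eq_of_mem_singleton hy2]
  -- every iterate of u starting at a is defined and stays in φ i
  have hiter : ∀ n : ℕ, ∃ x, piter (fun z => op u z) n a = some x ∧ x ∈ φ i := by
    intro n
    induction n with
    | zero => exact ⟨a, rfl, ha⟩
    | succ n ih =>
      obtain ⟨x, hx1, hx2⟩ := ih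
      refine ⟨c ⟨(i, x), hx2⟩, ?_, hc2 ⟨(i, x), hx2⟩⟩
      show (piter (fun z => op u z) n a).bind (fun z => op u z) = _
      rw [hx1, Option.bind_some, hInv x hx2]
  -- TO at a: must be a cycle
  have hfix : op u a = some a := by
    rcases hTO u a with ⟨n, ⟨hn1, hn2, _⟩, _⟩ | ⟨n, hn1, hn2⟩
    · exact fix_of_cycle op hTrans h1W u a n hn1 hn2
    · obtain ⟨x, hx1, _⟩ := hiter n
      rw [hx1] at hn2
      exact absurd hn2 (by simp)
  -- hence c = a, so s ∘ r fixes a, so by 1W, r a = a ∈ ψ i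
  have hca : c ⟨(i, a), ha⟩ = a := by
    have := hInv a ha
    rw [hfix] at this
    exact (Option.some_injective _ this).symm
  have hsa : op s (b ⟨(i, a), ha⟩) = some a := by rw [hc1, hca]
  have hab : a = b ⟨(i, a), ha⟩ := h1W r s a _ (hb1 ⟨(i, a), ha⟩) hsa
  rw [hab]
  exact hb2 ⟨(i, a), ha⟩

end Aux

/-- For a transitive PAS, antisymmetry, 1W ∧ TL and 1W ∧ TO are
equivalent. -/
theorem stmt_16 {R : Type} [Nonempty R] (op : R → R → Option R)
    (hTrans : ∀ (I : Type) (φ ψ ρ : I → Set R),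
      Entails op φ ψ → Entails op ψ ρ → Entails op φ ρ) :
    [ -- antisymmetric
      (∀ (I : Type) (φ ψ : I → Set R),
        Entails op φ ψ → Entails op ψ φ → φ = ψ),
      -- 1W ∧ TL
      ((∀ r s a b : R, op r a = some b → op s b = some a → a = b) ∧
        ∀ r : R, TLfun (fun a => op r a)),
      -- 1W ∧ TO
      ((∀ r s a b : R, op r a = some b → op s b = some a → a = b) ∧
        ∀ r : R, TOfun (fun a => op r a)) ].TFAE := by
  tfae_have 1 → 2
  · intro hA
    have h1W := oneW_of_antisym op hA
    refine ⟨h1W, fun r a => ?_⟩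
    by_cases hdiv : ∃ n : ℕ, 1 ≤ n ∧ piter (fun x => op r x) n a = none
    · exact Or.inr hdiv
    · left
      push_neg at hdiv
      have hdef : ∀ n : ℕ, ∃ x, piter (fun z => op r z) n a = some x := by
        intro n
        rcases Nat.eq_zero_or_pos n with h0 | hpos
        · exact ⟨a, by subst h0; rfl⟩
        · cases h : piter (fun z => op r z) n a with
          | none => exact absurd h (hdiv n hpos)
          | some x => exact ⟨x, rfl⟩
      set φ : ℕ → Set R := fun n => {x | ∃ m, n ≤ m ∧ piter (fun z => op r z) m a = some x}
        with hφ
      have step : ∀ x m, piter (fun z => op r z) m a = some x →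
          ∃ y, op r x = some y ∧ piter (fun z => op r z) (m + 1) a = some y := by
        intro x m hx
        obtain ⟨y, hy⟩ := hdef (m + 1)
        refine ⟨y, ?_, hy⟩
        have : (piter (fun z => op r z) m a).bind (fun z => op r z) = some y := hy
        rw [hx, Option.bind_some] at this
        exact this
      have e1 : Entails op φ (fun n => φ (n + 1)) := by
        refine ⟨r, fun n x hx => ?_⟩
        obtain ⟨m, hm, hx'⟩ := hx
        obtain ⟨y, hy1, hy2⟩ := step x m hx'
        exact ⟨y, hy1, ⟨m + 1, by omega, hy2⟩⟩
      have e2 : Entails op (fun n => φ (n + 1)) φ := by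
        refine ⟨r, fun n x hx => ?_⟩
        obtain ⟨m, hm, hx'⟩ := hx
        obtain ⟨y, hy1, hy2⟩ := step x m hx'
        exact ⟨y, hy1, ⟨m + 1, by omega, hy2⟩⟩
      have heq := hA ℕ φ (fun n => φ (n + 1)) e1 e2
      have ha0 : a ∈ φ 0 := ⟨0, le_refl 0, rfl⟩
      have ha1 : a ∈ φ 1 := by rw [← congrFun heq 0]; exact ha0
      obtain ⟨m, hm, hma⟩ := ha1
      exact fix_of_cycle op hTrans h1W r a m hm hma
  tfae_have 2 → 3
  · rintro ⟨h1W, hTL⟩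
    refine ⟨h1W, fun r a => ?_⟩
    rcases hTL r a with h | h
    · exact Or.inl ⟨1, ⟨le_refl 1, by rw [piter_one]; exact h, fun m hm _ => hm⟩, odd_one⟩
    · exact Or.inr h
  tfae_have 3 → 1
  · rintro ⟨h1W, hTO⟩
    intro I φ ψ hφψ hψφ
    funext i
    exact Set.Subset.antisymm
      (subset_of_mutual op hTrans h1W hTO hφψ hψφ i)
      (subset_of_mutual op hTrans h1W hTO hψφ hφψ i)
  tfae_finish
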